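/- Let n ≥ 2, let μ₁, μ₂ be exchangeable probability measures on (Fin n → ℕ), and let μ = μ₁.prod μ₂. Define ER^⊥ = μ₁{c | c 0 = c 1} · μ₂{c | c 0 = c 1} + μ₁{c | c 0 ≠ c 1} · μ₂{c | c 0 ≠ c 1}, and assume ER^⊥ < 1. Define the telescopic adjusted Rand index TARI(c₁, c₂) = (R(c₁, c₂) − ER^⊥) / (1 − ER^⊥), where R(c₁, c₂) = (n choose 2)⁻¹ · Σ_{i < j} [𝟙(c₁ i = c₁ j ∧ c₂ i = c₂ j) + 𝟙(c₁ i ≠ c₁ j ∧ c₂ i ≠ c₂ j)] is the Rand index. Then the expected value of TARI under μ is 0: ∫ TARI dμ = 0. -/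

import Mathlib

open MeasureTheory

lemma tari_ind_eq {α β : Type*} [MeasurableSpace α] [MeasurableSpace β]
    (P : α → Prop) (Q : β → Prop) [DecidablePred P] [DecidablePred Q] :
    (fun p : α × β => if P p.1 ∧ Q p.2 then (1:ℝ) else 0)
      = ({a | P a} ×ˢ {b | Q b}).indicator (fun _ => (1:ℝ)) := by
  funext p
  simp [Set.indicator_apply, Set.mem_prod]

lemma tari_int_ind {α β : Type*} [MeasurableSpace α] [MeasurableSpace β]
    (μ : Measure α) (ν : Measure β) [SigmaFinite μ] [SigmaFinite ν]
    (P : α → Prop) (Q : β → Prop) [DecidablePred P] [DecidablePred Q]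
    (hA : MeasurableSet {a | P a}) (hB : MeasurableSet {b | Q b}) :
    ∫ p, (if P p.1 ∧ Q p.2 then (1:ℝ) else 0) ∂(μ.prod ν)
      = (μ {a | P a}).toReal * (ν {b | Q b}).toReal := by
  rw [tari_ind_eq, integral_indicator_const (1:ℝ) (hA.prod hB), measureReal_def, Measure.prod_prod,
    ENNReal.toReal_mul, smul_eq_mul, mul_one]

lemma tari_intble_ind {α β : Type*} [MeasurableSpace α] [MeasurableSpace β]
    (μ : Measure α) (ν : Measure β) [IsFiniteMeasure μ] [IsFiniteMeasure ν]
    (P : α → Prop) (Q : β → Prop) [DecidablePred P] [DecidablePred Q]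
    (hA : MeasurableSet {a | P a}) (hB : MeasurableSet {b | Q b}) :
    Integrable (fun p : α × β => if P p.1 ∧ Q p.2 then (1:ℝ) else 0) (μ.prod ν) := by
  rw [tari_ind_eq]
  exact (integrable_const (1:ℝ)).indicator (hA.prod hB)

lemma tari_meas_eq {n : ℕ} (i j : Fin n) :
    MeasurableSet {c : Fin n → ℕ | c i = c j} :=
  measurableSet_eq_fun (measurable_pi_apply _) (measurable_pi_apply _)

lemma tari_meas_ne {n : ℕ} (i j : Fin n) :
    MeasurableSet {c : Fin n → ℕ | c i ≠ c j} := by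
  have : {c : Fin n → ℕ | c i ≠ c j} = {c : Fin n → ℕ | c i = c j}ᶜ := rfl
  rw [this]
  exact (tari_meas_eq i j).compl

lemma tari_exch_pair {n : ℕ} (hn : 2 ≤ n) (μ : Measure (Fin n → ℕ))
    (hexch : ∀ σ : Equiv.Perm (Fin n), μ.map (fun c : Fin n → ℕ => c ∘ σ) = μ)
    (i j : Fin n) (hij : i ≠ j) :
    μ {c | c i = c j} = μ {c | c ⟨0, Nat.lt_of_lt_of_le Nat.zero_lt_two hn⟩ = c ⟨1, Nat.lt_of_lt_of_le Nat.one_lt_two hn⟩} := by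
  set i0 : Fin n := ⟨0, Nat.lt_of_lt_of_le Nat.zero_lt_two hn⟩ with hi0
  set i1 : Fin n := ⟨1, Nat.lt_of_lt_of_le Nat.one_lt_two hn⟩ with hi1
  have h01 : i0 ≠ i1 := by simp [hi0, hi1, Fin.ext_iff]
  set σ : Equiv.Perm (Fin n) :=
    (Equiv.swap i0 i).trans (Equiv.swap ((Equiv.swap i0 i) i1) j) with hσ
  have hs_ne : (Equiv.swap i0 i) i1 ≠ i := by
    intro h
    exact h01 ((Equiv.swap i0 i).injective (by rw [Equiv.swap_apply_left, h])).symm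
  have hσ0 : σ i0 = i := by
    simp only [hσ, Equiv.trans_apply, Equiv.swap_apply_left]
    exact Equiv.swap_apply_of_ne_of_ne (Ne.symm hs_ne) hij
  have hσ1 : σ i1 = j := by
    simp [hσ, Equiv.trans_apply, Equiv.swap_apply_left]
  have hmeasf : Measurable (fun c : Fin n → ℕ => c ∘ σ) :=
    measurable_pi_lambda _ fun a => measurable_pi_apply _
  calc μ {c | c i = c j}
      = μ ((fun c : Fin n → ℕ => c ∘ σ) ⁻¹' {c | c i0 = c i1}) := by
        congr 1
        ext c
        simp [Function.comp, hσ0, hσ1]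
    _ = μ.map (fun c : Fin n → ℕ => c ∘ σ) {c | c i0 = c i1} :=
        (Measure.map_apply hmeasf (tari_meas_eq i0 i1)).symm
    _ = μ {c | c i0 = c i1} := by rw [hexch σ]

lemma tari_exch_pair_ne {n : ℕ} (hn : 2 ≤ n) (μ : Measure (Fin n → ℕ))
    [IsProbabilityMeasure μ]
    (hexch : ∀ σ : Equiv.Perm (Fin n), μ.map (fun c : Fin n → ℕ => c ∘ σ) = μ)
    (i j : Fin n) (hij : i ≠ j) :
    μ {c | c i ≠ c j} = μ {c | c ⟨0, Nat.lt_of_lt_of_le Nat.zero_lt_two hn⟩ ≠ c ⟨1, Nat.lt_of_lt_of_le Nat.one_lt_two hn⟩} := by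
  have h1 : {c : Fin n → ℕ | c i ≠ c j} = {c : Fin n → ℕ | c i = c j}ᶜ := rfl
  have h2 : {c : Fin n → ℕ | c ⟨0, Nat.lt_of_lt_of_le Nat.zero_lt_two hn⟩ ≠ c ⟨1, Nat.lt_of_lt_of_le Nat.one_lt_two hn⟩}
      = {c : Fin n → ℕ | c (⟨0, Nat.lt_of_lt_of_le Nat.zero_lt_two hn⟩ : Fin n) = c ⟨1, Nat.lt_of_lt_of_le Nat.one_lt_two hn⟩}ᶜ := rfl
  rw [h1, h2, measure_compl (tari_meas_eq i j) (measure_ne_top μ _),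
    measure_compl (tari_meas_eq _ _) (measure_ne_top μ _),
    tari_exch_pair hn μ hexch i j hij]

lemma tari_card_pairs (n : ℕ) :
    (Finset.univ.filter (fun q : Fin n × Fin n => q.1 < q.2)).card = n.choose 2 := by
  rw [Finset.card_eq_sum_card_fiberwise (f := Prod.snd) (t := Finset.univ)
    (fun _ _ => Finset.mem_univ _)]
  have h : ∀ j : Fin n, ((Finset.univ.filter (fun q : Fin n × Fin n => q.1 < q.2)).filter
      (fun q => q.2 = j)).card = (j : ℕ) := by
    intro j
    rw [Finset.filter_filter]
    have : (Finset.univ.filter (fun q : Fin n × Fin n => q.1 < q.2 ∧ q.2 = j))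
        = Finset.Iio j ×ˢ {j} := by
      ext ⟨a, b⟩
      simp only [Finset.mem_filter, Finset.mem_univ, true_and, Finset.mem_product,
        Finset.mem_Iio, Finset.mem_singleton]
      constructor
      · rintro ⟨h1, rfl⟩; exact ⟨h1, rfl⟩
      · rintro ⟨h1, rfl⟩; exact ⟨h1, rfl⟩
    rw [this, Finset.card_product, Finset.card_singleton, mul_one, Fin.card_Iio]
  simp only [h]
  rw [Fin.sum_univ_eq_sum_range (fun i => i), Finset.sum_range_id, Nat.choose_two_right]

/-- Under independence of the two exchangeable random partitions, the expected
telescopic adjusted Rand index equals `0`. -/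
theorem stmt_13 (n : ℕ) (hn : 2 ≤ n)
    (μ₁ μ₂ : Measure (Fin n → ℕ)) [IsProbabilityMeasure μ₁] [IsProbabilityMeasure μ₂]
    (hexch₁ : ∀ σ : Equiv.Perm (Fin n),
      μ₁.map (fun c : Fin n → ℕ => c ∘ σ) = μ₁)
    (hexch₂ : ∀ σ : Equiv.Perm (Fin n),
      μ₂.map (fun c : Fin n → ℕ => c ∘ σ) = μ₂)
    (ERperp : ℝ)
    (hER : ERperp =
      (μ₁ {c | c ⟨0, by omega⟩ = c ⟨1, by omega⟩}).toReal *
          (μ₂ {c | c ⟨0, by omega⟩ = c ⟨1, by omega⟩}).toReal +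
        (μ₁ {c | c ⟨0, by omega⟩ ≠ c ⟨1, by omega⟩}).toReal *
          (μ₂ {c | c ⟨0, by omega⟩ ≠ c ⟨1, by omega⟩}).toReal)
    (hERlt : ERperp < 1) :
    ∫ p, ((((n.choose 2 : ℝ)⁻¹ *
          ∑ q ∈ Finset.univ.filter (fun q : Fin n × Fin n => q.1 < q.2),
            ((if p.1 q.1 = p.1 q.2 ∧ p.2 q.1 = p.2 q.2 then (1 : ℝ) else 0) +
              (if p.1 q.1 ≠ p.1 q.2 ∧ p.2 q.1 ≠ p.2 q.2 then (1 : ℝ) else 0))) -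
          ERperp) / (1 - ERperp)) ∂(μ₁.prod μ₂) = 0 := by
  set μ := μ₁.prod μ₂ with hμ
  set F := Finset.univ.filter (fun q : Fin n × Fin n => q.1 < q.2) with hF
  set g : Fin n × Fin n → ((Fin n → ℕ) × (Fin n → ℕ)) → ℝ := fun q p =>
    (if p.1 q.1 = p.1 q.2 ∧ p.2 q.1 = p.2 q.2 then (1 : ℝ) else 0) +
      (if p.1 q.1 ≠ p.1 q.2 ∧ p.2 q.1 ≠ p.2 q.2 then (1 : ℝ) else 0) with hg
  have hgint : ∀ q : Fin n × Fin n, Integrable (g q) μ := by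
    intro q
    exact (tari_intble_ind μ₁ μ₂ (fun c => c q.1 = c q.2) (fun c => c q.1 = c q.2)
        (tari_meas_eq _ _) (tari_meas_eq _ _)).add
      (tari_intble_ind μ₁ μ₂ (fun c => c q.1 ≠ c q.2) (fun c => c q.1 ≠ c q.2)
        (tari_meas_ne _ _) (tari_meas_ne _ _))
  have hgval : ∀ q ∈ F, ∫ p, g q p ∂μ = ERperp := by
    intro q hq
    have hij : q.1 ≠ q.2 := ne_of_lt (Finset.mem_filter.mp hq).2
    rw [hg]
    rw [integral_add
      (tari_intble_ind μ₁ μ₂ (fun c => c q.1 = c q.2) (fun c => c q.1 = c q.2)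
        (tari_meas_eq _ _) (tari_meas_eq _ _))
      (tari_intble_ind μ₁ μ₂ (fun c => c q.1 ≠ c q.2) (fun c => c q.1 ≠ c q.2)
        (tari_meas_ne _ _) (tari_meas_ne _ _)),
      tari_int_ind μ₁ μ₂ (fun c => c q.1 = c q.2) (fun c => c q.1 = c q.2)
        (tari_meas_eq _ _) (tari_meas_eq _ _),
      tari_int_ind μ₁ μ₂ (fun c => c q.1 ≠ c q.2) (fun c => c q.1 ≠ c q.2)
        (tari_meas_ne _ _) (tari_meas_ne _ _),
      tari_exch_pair hn μ₁ hexch₁ q.1 q.2 hij,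
      tari_exch_pair hn μ₂ hexch₂ q.1 q.2 hij,
      tari_exch_pair_ne hn μ₁ hexch₁ q.1 q.2 hij,
      tari_exch_pair_ne hn μ₂ hexch₂ q.1 q.2 hij, hER]
  have hSint : Integrable (fun p => ∑ q ∈ F, g q p) μ :=
    integrable_finset_sum F (fun q _ => hgint q)
  have hSval : ∫ p, (∑ q ∈ F, g q p) ∂μ = (n.choose 2 : ℝ) * ERperp := by
    rw [integral_finset_sum F (fun q _ => hgint q), Finset.sum_congr rfl hgval,
      Finset.sum_const, hF, tari_card_pairs n, nsmul_eq_mul]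
  have hchoose : (n.choose 2 : ℝ) ≠ 0 := by
    have : 0 < n.choose 2 := Nat.choose_pos hn
    exact_mod_cast this.ne'
  have hFull : ∫ p, ((n.choose 2 : ℝ)⁻¹ * ∑ q ∈ F, g q p - ERperp) ∂μ = 0 := by
    rw [integral_sub (hSint.const_mul _) (integrable_const _), integral_const_mul, hSval,
      integral_const, inv_mul_cancel_left₀ hchoose]
    simp
  calc ∫ p, (((n.choose 2 : ℝ)⁻¹ * ∑ q ∈ F, g q p - ERperp) / (1 - ERperp)) ∂μ
      = (∫ p, ((n.choose 2 : ℝ)⁻¹ * ∑ q ∈ F, g q p - ERperp) ∂μ) / (1 - ERperp) :=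
        integral_div _ _
    _ = 0 := by rw [hFull, zero_div]
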